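/- Let θ > 0, ε > 0, let ν be a probability measure on ℝ (the distribution of user i's data), and let μ be a probability measure on ℝ (the distribution of the other users' aggregate). Define f_P(y) = ∫∫ p_θ(y - m - t) dμ(m) dν(t) and f_⊥(y) = ∫ p_θ(y - m) dμ(m). If ∫ e^{|t|/θ} dν(t) ≤ e^ε, then f_P(y) ≤ e^ε · f_⊥(y) for all y ∈ ℝ. -/

import Mathlib

open MeasureTheory

/-- The Laplace density with scale parameter `θ`. -/
noncomputable def lap (θ z : ℝ) : ℝ := (1 / (2 * θ)) * Real.exp (-|z| / θ)

lemma lap_nonneg (θ z : ℝ) (hθ : 0 < θ) : 0 ≤ lap θ z := by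
  unfold lap
  positivity

lemma lap_le (θ z : ℝ) (hθ : 0 < θ) : lap θ z ≤ 1 / (2 * θ) := by
  unfold lap
  have h1 : Real.exp (-|z| / θ) ≤ 1 := by
    apply Real.exp_le_one_iff.mpr
    have : 0 ≤ |z| / θ := by positivity
    linarith [neg_div θ |z|]
  nlinarith [one_div_pos.mpr (by linarith : (0:ℝ) < 2 * θ)]

lemma lap_cont (θ : ℝ) : Continuous (fun z => lap θ z) := by
  unfold lap
  fun_prop

lemma lap_shift_le (θ z t : ℝ) (hθ : 0 < θ) :
    lap θ (z - t) ≤ Real.exp (|t| / θ) * lap θ z := by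
  unfold lap
  rw [mul_comm (Real.exp (|t| / θ)), mul_assoc, ← Real.exp_add]
  have h : -|z - t| / θ ≤ -|z| / θ + |t| / θ := by
    rw [← add_div, div_le_div_iff_of_pos_right hθ]
    have := abs_sub_abs_le_abs_sub z (z - t)
    simp at this ⊢
    linarith [abs_sub_comm z (z - t)]
  have := Real.exp_le_exp.mpr h
  nlinarith [one_div_pos.mpr (by linarith : (0:ℝ) < 2 * θ), Real.exp_pos (-|z - t| / θ)]

lemma lap_integrable (θ : ℝ) (hθ : 0 < θ) (μ : Measure ℝ) [IsProbabilityMeasure μ]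
    (y t : ℝ) : Integrable (fun m => lap θ (y - m - t)) μ := by
  apply Integrable.mono' (integrable_const (1 / (2 * θ)))
  · exact (((lap_cont θ).comp (by fun_prop : Continuous fun m : ℝ => y - m - t))).aestronglyMeasurable
  · filter_upwards with m
    rw [Real.norm_eq_abs, abs_of_nonneg (lap_nonneg θ _ hθ)]
    exact lap_le θ _ hθ

/-- Relaxed sufficient condition for `(ε, S_{P,⊥})`-pufferfish privacy: if the moment
condition `∫ e^{|t|/θ} dν(t) ≤ e^ε` holds for the user's data distribution `ν`, then the
noised density with the user present is at most `e^ε` times the density with the user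
absent. -/
theorem pufferfish_distribution_absence (θ ε : ℝ) (hθ : 0 < θ) (hε : 0 < ε)
    (ν μ : Measure ℝ) [IsProbabilityMeasure ν] [IsProbabilityMeasure μ]
    (hint : Integrable (fun t => Real.exp (|t| / θ)) ν)
    (hmom : (∫ t, Real.exp (|t| / θ) ∂ν) ≤ Real.exp ε) (y : ℝ) :
    (∫ t, ∫ m, lap θ (y - m - t) ∂μ ∂ν) ≤ Real.exp ε * ∫ m, lap θ (y - m) ∂μ := by
  set C : ℝ := ∫ m, lap θ (y - m) ∂μ with hC
  have hC0 : 0 ≤ C := integral_nonneg fun m => lap_nonneg θ _ hθ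
  have hinner : ∀ t : ℝ, (∫ m, lap θ (y - m - t) ∂μ) ≤ Real.exp (|t| / θ) * C := by
    intro t
    rw [hC, ← integral_const_mul]
    apply integral_mono_of_nonneg
    · filter_upwards with m; exact lap_nonneg θ _ hθ
    · exact ((lap_integrable θ hθ μ y 0).congr (by simp)).const_mul _
    · filter_upwards with m
      exact lap_shift_le θ (y - m) t hθ
  calc (∫ t, ∫ m, lap θ (y - m - t) ∂μ ∂ν)
      ≤ ∫ t, Real.exp (|t| / θ) * C ∂ν := by
        apply integral_mono_of_nonneg
        · filter_upwards with t
          exact integral_nonneg fun m => lap_nonneg θ _ hθ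
        · exact hint.mul_const C
        · filter_upwards with t; exact hinner t
    _ = (∫ t, Real.exp (|t| / θ) ∂ν) * C := integral_mul_const _ _
    _ ≤ Real.exp ε * C := mul_le_mul_of_nonneg_right hmom hC0
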